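/- Let A₀, A₁, B₀, B₁, C₀, C₁ be Hermitian operators with eigenvalues ±1 on qubit Hilbert spaces, with A₀, A₁ (resp. B₀,B₁ and C₀,C₁) anticommuting. Then for any biseparable three-qubit state ρ = Σ p_λ ρ_A^λ⊗ρ_{BC}^λ + Σ q_λ ρ_{AC}^λ⊗ρ_B^λ + Σ r_λ ρ_{AB}^λ⊗ρ_C^λ, the expectation of the Svetlichny operator S = A₀B₀C₁+A₀B₁C₀+A₁B₀C₀−A₁B₁C₁+A₀B₁C₁+A₁B₀C₁+A₁B₁C₀−A₀B₀C₀ satisfies Tr(Sρ) ≤ 2√2. -/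

import Mathlib

set_option linter.unusedSectionVars false


open Matrix Kronecker ComplexOrder

/-- A density matrix: positive semidefinite with unit trace. -/
def IsDensity {ι : Type*} [Fintype ι] [DecidableEq ι] (ρ : Matrix ι ι ℂ) : Prop :=
  ρ.PosSemidef ∧ ρ.trace = 1

/-- Reindexing ((a,c),b) ↦ (a,(b,c)) for the AC|B biseparable terms. -/
def eACB : (Fin 2 × Fin 2) × Fin 2 ≃ Fin 2 × (Fin 2 × Fin 2) where
  toFun := fun p => (p.1.1, (p.2, p.1.2))
  invFun := fun p => ((p.1, p.2.2), p.2.1)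
  left_inv := fun _ => rfl
  right_inv := fun _ => rfl

/-- Reindexing ((a,b),c) ↦ (a,(b,c)) for the AB|C biseparable terms. -/
def eABC : (Fin 2 × Fin 2) × Fin 2 ≃ Fin 2 × (Fin 2 × Fin 2) :=
  Equiv.prodAssoc (Fin 2) (Fin 2) (Fin 2)

variable {ι : Type*} [Fintype ι] [DecidableEq ι]

lemma trace_psd_re_nonneg {M : Matrix ι ι ℂ} (hM : M.PosSemidef) : 0 ≤ M.trace.re := by
  obtain ⟨B, rfl⟩ : ∃ B : Matrix ι ι ℂ, M = Bᴴ * B := by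
    open scoped MatrixOrder Matrix.Norms.L2Operator in
    exact CStarAlgebra.nonneg_iff_eq_star_mul_self.mp hM.nonneg
  have h : (Bᴴ * B).trace = ∑ i, ∑ j, (starRingEnd ℂ) (B j i) * B j i := by
    simp [Matrix.trace, Matrix.diag, Matrix.mul_apply, Matrix.conjTranspose_apply]
  rw [h]
  rw [Complex.re_sum]
  refine Finset.sum_nonneg fun i _ => ?_
  rw [Complex.re_sum]
  refine Finset.sum_nonneg fun j _ => ?_
  rw [mul_comm, Complex.mul_conj]
  simp only [Complex.ofReal_re]
  exact Complex.normSq_nonneg _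

lemma trace_mul_psd_re_nonneg {M ρ : Matrix ι ι ℂ} (hM : M.PosSemidef) (hρ : ρ.PosSemidef) :
    0 ≤ ((M * ρ).trace).re := by
  obtain ⟨B, rfl⟩ : ∃ B : Matrix ι ι ℂ, ρ = Bᴴ * B := by
    open scoped MatrixOrder Matrix.Norms.L2Operator in
    exact CStarAlgebra.nonneg_iff_eq_star_mul_self.mp hρ.nonneg
  have h : (M * (Bᴴ * B)).trace = (B * M * Bᴴ).trace := by
    rw [Matrix.trace_mul_comm (M) (Bᴴ * B), Matrix.mul_assoc, Matrix.trace_mul_comm Bᴴ (B*M), Matrix.mul_assoc]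
  rw [h]
  exact trace_psd_re_nonneg (hM.mul_mul_conjTranspose_same B)

lemma psd_smul_real {X : Matrix ι ι ℂ} {c : ℝ} (hc : 0 ≤ c) (hX : X.PosSemidef) :
    ((c : ℂ) • X).PosSemidef := by
  exact hX.smul (by exact_mod_cast Complex.zero_le_real.mpr hc)

lemma expec_le {M ρ : Matrix ι ι ℂ} {c : ℝ}
    (h : ((c : ℂ) • 1 - M).PosSemidef) (hρ : IsDensity ρ) : ((M * ρ).trace).re ≤ c := by
  have h0 := trace_mul_psd_re_nonneg h hρ.1
  rw [Matrix.sub_mul, Matrix.smul_mul, Matrix.one_mul, Matrix.trace_sub, Matrix.trace_smul,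
    hρ.2] at h0
  simp only [smul_eq_mul, mul_one, Complex.sub_re, Complex.ofReal_re] at h0
  linarith

lemma herm_smul_one {c : ℝ} : ((c : ℂ) • (1 : Matrix ι ι ℂ)).IsHermitian := by
  unfold Matrix.IsHermitian
  rw [Matrix.conjTranspose_smul, Matrix.conjTranspose_one]
  simp

lemma psd_of_sq {M : Matrix ι ι ℂ} {c : ℝ} (hM : M.IsHermitian) (hc : 0 < c)
    (h : (((c^2 : ℝ) : ℂ) • 1 - M * M).PosSemidef) : ((c : ℂ) • 1 - M).PosSemidef := by
  have hN : ((c : ℂ) • 1 - M).IsHermitian := herm_smul_one.sub hM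
  have key : (c : ℂ) • (1 : Matrix ι ι ℂ) - M =
      (((2*c)⁻¹ : ℝ) : ℂ) • ((((c : ℂ) • 1 - M)ᴴ * ((c : ℂ) • 1 - M))
        + (((c^2 : ℝ) : ℂ) • 1 - M * M)) := by
    rw [hN.eq]
    have expand : ((c : ℂ) • (1 : Matrix ι ι ℂ) - M) * ((c : ℂ) • 1 - M)
        = ((c^2 : ℝ) : ℂ) • 1 - ((2*c : ℝ) : ℂ) • M + M * M := by
      simp only [Matrix.sub_mul, Matrix.mul_sub, Matrix.smul_mul, Matrix.mul_smul,
        Matrix.one_mul, Matrix.mul_one, smul_smul]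
      push_cast
      module
    rw [expand]
    have : (((c : ℂ) • (1 : Matrix ι ι ℂ)) - M) = ((c:ℂ) • 1 - M) := rfl
    push_cast
    match_scalars <;> (field_simp; try ring)
  rw [key]
  refine psd_smul_real (by positivity) (Matrix.PosSemidef.add ?_ h)
  exact Matrix.posSemidef_conjTranspose_mul_self _

lemma trace_herm_mul_im_zero {M ρ : Matrix ι ι ℂ} (hM : M.IsHermitian) (hρ : ρ.IsHermitian) :
    ((M * ρ).trace).im = 0 := by
  have h : (starRingEnd ℂ) ((M * ρ).trace) = (M * ρ).trace := by
    have h1 : ((M * ρ)ᴴ).trace = (starRingEnd ℂ) ((M * ρ).trace) := by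
      rw [Matrix.trace_conjTranspose]
      rfl
    rw [← h1, Matrix.conjTranspose_mul, hM.eq, hρ.eq, Matrix.trace_mul_comm]
  exact Complex.conj_eq_iff_im.mp h

lemma herm_real_smul {X : Matrix ι ι ℂ} (hX : X.IsHermitian) (c : ℝ) :
    ((c : ℂ) • X).IsHermitian := by
  unfold Matrix.IsHermitian
  rw [Matrix.conjTranspose_smul, hX.eq]
  simp

lemma norm_from_dirs {x y c : ℝ} (hc : 0 ≤ c)
    (h : ∀ u v : ℝ, u^2 + v^2 = 1 → u*x + v*y ≤ c) : x^2 + y^2 ≤ c^2 := by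
  rcases eq_or_lt_of_le (by positivity : (0:ℝ) ≤ x^2 + y^2) with h0 | h0
  · nlinarith
  · set s := Real.sqrt (x^2 + y^2) with hsdef
    have hs : s^2 = x^2 + y^2 := Real.sq_sqrt (le_of_lt h0)
    have hspos : 0 < s := Real.sqrt_pos.mpr h0
    have huv : (x/s)^2 + (y/s)^2 = 1 := by
      field_simp
      linarith [hs]
    have hle := h (x/s) (y/s) huv
    have hxy : (x/s)*x + (y/s)*y = s := by
      field_simp
      linarith [hs]
    rw [hxy] at hle
    nlinarith

/-- generic "two anticommuting involutions" expectation bound -/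
lemma pair_bound {O₀ O₁ : Matrix ι ι ℂ}
    (h₀ : O₀.IsHermitian) (h₁ : O₁.IsHermitian)
    (h₀sq : O₀ * O₀ = 1) (h₁sq : O₁ * O₁ = 1) (hanti : O₀ * O₁ = -(O₁ * O₀))
    {ρ : Matrix ι ι ℂ} (hρ : IsDensity ρ) :
    ((O₀ * ρ).trace).re ^ 2 + ((O₁ * ρ).trace).re ^ 2 ≤ 1 := by
  have main : ∀ u v : ℝ, u^2 + v^2 = 1 →
      u * ((O₀ * ρ).trace).re + v * ((O₁ * ρ).trace).re ≤ 1 := by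
    intro u v huv
    set N := (u : ℂ) • O₀ + (v : ℂ) • O₁ with hN
    have hNh : N.IsHermitian := (herm_real_smul h₀ u).add (herm_real_smul h₁ v)
    have hNsq : N * N = ((u:ℂ)^2 + (v:ℂ)^2) • 1 := by
      rw [hN]
      simp only [Matrix.add_mul, Matrix.mul_add, Matrix.smul_mul, Matrix.mul_smul,
        smul_smul, h₀sq, h₁sq, hanti]
      module
    have hpsd : (((1^2 : ℝ) : ℂ) • 1 - N * N).PosSemidef := by
      have : (((1^2 : ℝ) : ℂ) • (1 : Matrix ι ι ℂ) - N * N) = 0 := by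
        rw [hNsq]
        have : ((u:ℂ)^2 + (v:ℂ)^2) = 1 := by
          have := huv
          push_cast
          exact_mod_cast congrArg (fun t : ℝ => (t : ℂ)) huv
        rw [this]
        norm_num
      rw [this]
      exact Matrix.PosSemidef.zero
    have hle := expec_le (psd_of_sq hNh one_pos hpsd) hρ
    have htr : ((N * ρ).trace).re
        = u * ((O₀ * ρ).trace).re + v * ((O₁ * ρ).trace).re := by
      rw [hN, Matrix.add_mul, Matrix.smul_mul, Matrix.smul_mul, Matrix.trace_add,
        Matrix.trace_smul, Matrix.trace_smul]
      simp [Complex.add_re, Complex.re_ofReal_mul]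
    rw [htr] at hle
    exact hle
  have := norm_from_dirs (by norm_num : (0:ℝ) ≤ 1) main
  simpa using this

variable {κ : Type*} [Fintype κ] [DecidableEq κ]

lemma kron_conjTranspose (X : Matrix ι ι ℂ) (Y : Matrix κ κ ℂ) :
    (X ⊗ₖ Y)ᴴ = Xᴴ ⊗ₖ Yᴴ := by
  ext ⟨a, b⟩ ⟨c, d⟩
  simp [Matrix.conjTranspose_apply, Matrix.kroneckerMap_apply]

lemma kron_herm {X : Matrix ι ι ℂ} {Y : Matrix κ κ ℂ}
    (hX : X.IsHermitian) (hY : Y.IsHermitian) : (X ⊗ₖ Y).IsHermitian := by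
  unfold Matrix.IsHermitian
  rw [kron_conjTranspose, hX.eq, hY.eq]

lemma neg_kron (X : Matrix ι ι ℂ) (Y : Matrix κ κ ℂ) : (-X) ⊗ₖ Y = -(X ⊗ₖ Y) := by
  ext ⟨a, b⟩ ⟨c, d⟩
  simp [Matrix.kroneckerMap_apply]

lemma kron_neg (X : Matrix ι ι ℂ) (Y : Matrix κ κ ℂ) : X ⊗ₖ (-Y) = -(X ⊗ₖ Y) := by
  ext ⟨a, b⟩ ⟨c, d⟩
  simp [Matrix.kroneckerMap_apply]

/-- CHSH-pair squared bound for fully anticommuting observables. -/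
lemma chsh_bound {A₀ A₁ : Matrix ι ι ℂ} {B₀ B₁ : Matrix κ κ ℂ}
    (hA₀ : A₀.IsHermitian) (hA₁ : A₁.IsHermitian)
    (hB₀ : B₀.IsHermitian) (hB₁ : B₁.IsHermitian)
    (hA₀sq : A₀ * A₀ = 1) (hA₁sq : A₁ * A₁ = 1)
    (hB₀sq : B₀ * B₀ = 1) (hB₁sq : B₁ * B₁ = 1)
    (hAanti : A₀ * A₁ = -(A₁ * A₀)) (hBanti : B₀ * B₁ = -(B₁ * B₀))
    {ρ : Matrix (ι × κ) (ι × κ) ℂ} (hρ : IsDensity ρ) :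
    (((A₀ ⊗ₖ B₀ + A₀ ⊗ₖ B₁ + A₁ ⊗ₖ B₀ - A₁ ⊗ₖ B₁) * ρ).trace).re ^ 2
      + (((-(A₀ ⊗ₖ B₀) + A₀ ⊗ₖ B₁ + A₁ ⊗ₖ B₀ + A₁ ⊗ₖ B₁) * ρ).trace).re ^ 2 ≤ 8 := by
  have hA10 : A₁ * A₀ = -(A₀ * A₁) := by rw [hAanti, neg_neg]
  have hB10 : B₁ * B₀ = -(B₀ * B₁) := by rw [hBanti, neg_neg]
  have hTh : ((A₀ * A₁) ⊗ₖ (B₀ * B₁)).IsHermitian := by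
    unfold Matrix.IsHermitian
    rw [kron_conjTranspose, Matrix.conjTranspose_mul, Matrix.conjTranspose_mul,
      hA₀.eq, hA₁.eq, hB₀.eq, hB₁.eq, hA10, hB10, neg_kron, kron_neg, neg_neg]
  have hAsq4 : A₀ * A₁ * (A₀ * A₁) = -1 := by
    calc A₀ * A₁ * (A₀ * A₁) = A₀ * (A₁ * A₀) * A₁ := by
          rw [Matrix.mul_assoc, Matrix.mul_assoc, Matrix.mul_assoc]
      _ = -(A₀ * A₀ * (A₁ * A₁)) := by
          rw [hA10]
          simp only [Matrix.mul_neg, Matrix.neg_mul]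
          simp [Matrix.mul_assoc]
      _ = -1 := by rw [hA₀sq, hA₁sq, Matrix.mul_one]
  have hBsq4 : B₀ * B₁ * (B₀ * B₁) = -1 := by
    calc B₀ * B₁ * (B₀ * B₁) = B₀ * (B₁ * B₀) * B₁ := by
          rw [Matrix.mul_assoc, Matrix.mul_assoc, Matrix.mul_assoc]
      _ = -(B₀ * B₀ * (B₁ * B₁)) := by
          rw [hB10]
          simp only [Matrix.mul_neg, Matrix.neg_mul]
          simp [Matrix.mul_assoc]
      _ = -1 := by rw [hB₀sq, hB₁sq, Matrix.mul_one]
  have hTsq : ((A₀ * A₁) ⊗ₖ (B₀ * B₁)) * ((A₀ * A₁) ⊗ₖ (B₀ * B₁)) = 1 := by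
    rw [← Matrix.mul_kronecker_mul, hAsq4, hBsq4, neg_kron, kron_neg, neg_neg,
      Matrix.one_kronecker_one]
  have hTpsd : ((1 : Matrix (ι × κ) (ι × κ) ℂ) + (A₀ * A₁) ⊗ₖ (B₀ * B₁)).PosSemidef := by
    have h1h : ((1 : Matrix (ι × κ) (ι × κ) ℂ) + (A₀ * A₁) ⊗ₖ (B₀ * B₁)).IsHermitian :=
      Matrix.isHermitian_one.add hTh
    have heq : (1 : Matrix (ι × κ) (ι × κ) ℂ) + (A₀ * A₁) ⊗ₖ (B₀ * B₁)
        = ((2⁻¹ : ℝ) : ℂ) • (((1 : Matrix (ι × κ) (ι × κ) ℂ) + (A₀ * A₁) ⊗ₖ (B₀ * B₁))ᴴ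
          * ((1 : Matrix (ι × κ) (ι × κ) ℂ) + (A₀ * A₁) ⊗ₖ (B₀ * B₁))) := by
      rw [h1h.eq]
      simp only [Matrix.add_mul, Matrix.mul_add, Matrix.one_mul, Matrix.mul_one, hTsq]
      push_cast
      module
    rw [heq]
    exact psd_smul_real (by norm_num) (Matrix.posSemidef_conjTranspose_mul_self _)
  have h8 : ((2 * Real.sqrt 2)^2 : ℝ) = 8 := by
    rw [mul_pow, Real.sq_sqrt (by norm_num : (0:ℝ) ≤ 2)]
    norm_num
  have main : ∀ u v : ℝ, u^2 + v^2 = 1 →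
      u * (((A₀ ⊗ₖ B₀ + A₀ ⊗ₖ B₁ + A₁ ⊗ₖ B₀ - A₁ ⊗ₖ B₁) * ρ).trace).re
      + v * (((-(A₀ ⊗ₖ B₀) + A₀ ⊗ₖ B₁ + A₁ ⊗ₖ B₀ + A₁ ⊗ₖ B₁) * ρ).trace).re
      ≤ 2 * Real.sqrt 2 := by
    intro u v huv
    set M := (u : ℂ) • (A₀ ⊗ₖ B₀ + A₀ ⊗ₖ B₁ + A₁ ⊗ₖ B₀ - A₁ ⊗ₖ B₁)
      + (v : ℂ) • (-(A₀ ⊗ₖ B₀) + A₀ ⊗ₖ B₁ + A₁ ⊗ₖ B₀ + A₁ ⊗ₖ B₁) with hM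
    have hMh : M.IsHermitian := by
      refine (herm_real_smul ?_ u).add (herm_real_smul ?_ v)
      · exact (((kron_herm hA₀ hB₀).add (kron_herm hA₀ hB₁)).add
          (kron_herm hA₁ hB₀)).sub (kron_herm hA₁ hB₁)
      · exact ((((kron_herm hA₀ hB₀).neg).add (kron_herm hA₀ hB₁)).add
          (kron_herm hA₁ hB₀)).add (kron_herm hA₁ hB₁)
    have huvC : (u:ℂ)^2 + (v:ℂ)^2 = 1 := by exact_mod_cast congrArg (fun t : ℝ => (t : ℂ)) huv
    have hMsq : M * M = ((4:ℂ) * ((u:ℂ)^2 + (v:ℂ)^2)) • (1 - (A₀ * A₁) ⊗ₖ (B₀ * B₁)) := by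
      rw [hM]
      simp only [Matrix.smul_mul, Matrix.mul_smul, Matrix.add_mul, Matrix.mul_add,
        Matrix.sub_mul, Matrix.mul_sub, Matrix.neg_mul, Matrix.mul_neg, smul_smul,
        ← Matrix.mul_kronecker_mul, hA₀sq, hA₁sq, hB₀sq, hB₁sq, hA10, hB10,
        neg_kron, kron_neg, Matrix.one_kronecker_one, neg_neg]
      module
    have hpsd : ((((2 * Real.sqrt 2)^2 : ℝ) : ℂ) • 1 - M * M).PosSemidef := by
      have heq2 : ((((2 * Real.sqrt 2)^2 : ℝ) : ℂ) • (1 : Matrix (ι × κ) (ι × κ) ℂ) - M * M)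
          = ((4 : ℝ) : ℂ) • ((1 : Matrix (ι × κ) (ι × κ) ℂ) + (A₀ * A₁) ⊗ₖ (B₀ * B₁)) := by
        rw [hMsq, h8, huvC]
        push_cast
        module
      rw [heq2]
      exact psd_smul_real (by norm_num) hTpsd
    have hcpos : (0:ℝ) < 2 * Real.sqrt 2 := by positivity
    have hle := expec_le (psd_of_sq hMh hcpos hpsd) hρ
    have htr : ((M * ρ).trace).re
        = u * (((A₀ ⊗ₖ B₀ + A₀ ⊗ₖ B₁ + A₁ ⊗ₖ B₀ - A₁ ⊗ₖ B₁) * ρ).trace).re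
          + v * (((-(A₀ ⊗ₖ B₀) + A₀ ⊗ₖ B₁ + A₁ ⊗ₖ B₀ + A₁ ⊗ₖ B₁) * ρ).trace).re := by
      rw [hM, Matrix.add_mul, Matrix.smul_mul, Matrix.smul_mul, Matrix.trace_add,
        Matrix.trace_smul, Matrix.trace_smul]
      simp [Complex.add_re, Complex.re_ofReal_mul]
    rw [htr] at hle
    exact hle
  have := norm_from_dirs (le_of_lt (by positivity : (0:ℝ) < 2 * Real.sqrt 2)) main
  rw [h8] at this
  exact this

lemma trace_submatrix_equiv' {I J : Type*} [Fintype I] [Fintype J] [DecidableEq I] [DecidableEq J]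
    (e : I ≃ J) (M : Matrix J J ℂ) : (M.submatrix e e).trace = M.trace := by
  unfold Matrix.trace Matrix.diag
  simp only [Matrix.submatrix_apply]
  exact Fintype.sum_equiv e _ _ (fun i => rfl)

lemma trace_mul_reindex {I J : Type*} [Fintype I] [Fintype J] [DecidableEq I] [DecidableEq J]
    (e : I ≃ J) (M : Matrix J J ℂ) (X : Matrix I I ℂ) :
    (M * (X.reindex e e)).trace = ((M.reindex e.symm e.symm) * X).trace := by
  have hM : M = (M.reindex e.symm e.symm).reindex e e := by simp
  conv_lhs => rw [hM]
  rw [Matrix.reindex_apply, Matrix.reindex_apply, Matrix.reindex_apply,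
    Matrix.submatrix_mul_equiv]
  exact trace_submatrix_equiv' _ _

lemma trace_kron_mul (X σ : Matrix ι ι ℂ) (Y τ : Matrix κ κ ℂ) :
    ((X ⊗ₖ Y) * (σ ⊗ₖ τ)).trace = (X * σ).trace * (Y * τ).trace := by
  rw [← Matrix.mul_kronecker_mul, Matrix.trace_kronecker]

lemma cs_helper {a b x y : ℝ} (h1 : a^2 + b^2 ≤ 1) (h2 : x^2 + y^2 ≤ 8) :
    a*x + b*y ≤ 2 * Real.sqrt 2 := by
  have hs : (2 * Real.sqrt 2)^2 = 8 := by
    rw [mul_pow, Real.sq_sqrt (by norm_num : (0:ℝ) ≤ 2)]; norm_num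
  nlinarith [sq_nonneg (a*y - b*x), Real.sqrt_nonneg 2, sq_nonneg (a*x + b*y),
    sq_nonneg (a*x + b*y - 2 * Real.sqrt 2), sq_nonneg a, sq_nonneg b, sq_nonneg x, sq_nonneg y,
    mul_nonneg (add_nonneg (sq_nonneg a) (sq_nonneg b)) (add_nonneg (sq_nonneg x) (sq_nonneg y))]

lemma combine {z0 z1 w0 w1 : ℂ} (hz0 : z0.im = 0) (hz1 : z1.im = 0)
    (h1 : z0.re^2 + z1.re^2 ≤ 1) (h2 : w0.re^2 + w1.re^2 ≤ 8) :
    (z0*w0 + z1*w1).re ≤ 2 * Real.sqrt 2 := by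
  simp only [Complex.add_re, Complex.mul_re, hz0, hz1, zero_mul, sub_zero]
  exact cs_helper h1 h2

lemma combine' {z0 z1 w0 w1 : ℂ} (hw0 : w0.im = 0) (hw1 : w1.im = 0)
    (h1 : w0.re^2 + w1.re^2 ≤ 1) (h2 : z0.re^2 + z1.re^2 ≤ 8) :
    (z0*w0 + z1*w1).re ≤ 2 * Real.sqrt 2 := by
  rw [mul_comm z0, mul_comm z1]
  exact combine hw0 hw1 h1 h2

theorem stmt12 (A₀ A₁ B₀ B₁ C₀ C₁ : Matrix (Fin 2) (Fin 2) ℂ)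
    (hA₀ : A₀.IsHermitian) (hA₁ : A₁.IsHermitian)
    (hB₀ : B₀.IsHermitian) (hB₁ : B₁.IsHermitian)
    (hC₀ : C₀.IsHermitian) (hC₁ : C₁.IsHermitian)
    (hA₀sq : A₀ * A₀ = 1) (hA₁sq : A₁ * A₁ = 1)
    (hB₀sq : B₀ * B₀ = 1) (hB₁sq : B₁ * B₁ = 1)
    (hC₀sq : C₀ * C₀ = 1) (hC₁sq : C₁ * C₁ = 1)
    (hAanti : A₀ * A₁ = -(A₁ * A₀)) (hBanti : B₀ * B₁ = -(B₁ * B₀))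
    (hCanti : C₀ * C₁ = -(C₁ * C₀))
    (n : ℕ) (p q r : Fin n → ℝ)
    (hp : ∀ l, 0 ≤ p l) (hq : ∀ l, 0 ≤ q l) (hr : ∀ l, 0 ≤ r l)
    (hsum : ∑ l, p l + ∑ l, q l + ∑ l, r l = 1)
    (ρA ρB ρC : Fin n → Matrix (Fin 2) (Fin 2) ℂ)
    (ρBC ρAC ρAB : Fin n → Matrix (Fin 2 × Fin 2) (Fin 2 × Fin 2) ℂ)
    (hρA : ∀ l, IsDensity (ρA l)) (hρB : ∀ l, IsDensity (ρB l))
    (hρC : ∀ l, IsDensity (ρC l)) (hρBC : ∀ l, IsDensity (ρBC l))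
    (hρAC : ∀ l, IsDensity (ρAC l)) (hρAB : ∀ l, IsDensity (ρAB l))
    (ρ : Matrix (Fin 2 × (Fin 2 × Fin 2)) (Fin 2 × (Fin 2 × Fin 2)) ℂ)
    (hρ : ρ = ∑ l, (p l : ℂ) • (ρA l ⊗ₖ ρBC l)
        + ∑ l, (q l : ℂ) • ((ρAC l ⊗ₖ ρB l).reindex eACB eACB)
        + ∑ l, (r l : ℂ) • ((ρAB l ⊗ₖ ρC l).reindex eABC eABC)) :
    (((A₀ ⊗ₖ (B₀ ⊗ₖ C₁) + A₀ ⊗ₖ (B₁ ⊗ₖ C₀) + A₁ ⊗ₖ (B₀ ⊗ₖ C₀) - A₁ ⊗ₖ (B₁ ⊗ₖ C₁)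
        + A₀ ⊗ₖ (B₁ ⊗ₖ C₁) + A₁ ⊗ₖ (B₀ ⊗ₖ C₁) + A₁ ⊗ₖ (B₁ ⊗ₖ C₀) - A₀ ⊗ₖ (B₀ ⊗ₖ C₀))
      * ρ).trace).re ≤ 2 * Real.sqrt 2 := by
  set S : Matrix (Fin 2 × (Fin 2 × Fin 2)) (Fin 2 × (Fin 2 × Fin 2)) ℂ :=
    A₀ ⊗ₖ (B₀ ⊗ₖ C₁) + A₀ ⊗ₖ (B₁ ⊗ₖ C₀) + A₁ ⊗ₖ (B₀ ⊗ₖ C₀) - A₁ ⊗ₖ (B₁ ⊗ₖ C₁)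
        + A₀ ⊗ₖ (B₁ ⊗ₖ C₁) + A₁ ⊗ₖ (B₀ ⊗ₖ C₁) + A₁ ⊗ₖ (B₁ ⊗ₖ C₀) - A₀ ⊗ₖ (B₀ ⊗ₖ C₀) with hS
  have decompP : S = A₀ ⊗ₖ (-(B₀ ⊗ₖ C₀) + B₀ ⊗ₖ C₁ + B₁ ⊗ₖ C₀ + B₁ ⊗ₖ C₁)
      + A₁ ⊗ₖ (B₀ ⊗ₖ C₀ + B₀ ⊗ₖ C₁ + B₁ ⊗ₖ C₀ - B₁ ⊗ₖ C₁) := by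
    rw [hS]
    ext ⟨a, b, c⟩ ⟨a', b', c'⟩
    simp [Matrix.add_apply, Matrix.sub_apply, Matrix.neg_apply, Matrix.kroneckerMap_apply]
    ring
  have decompQ : S.reindex eACB.symm eACB.symm
      = (-(A₀ ⊗ₖ C₀) + A₀ ⊗ₖ C₁ + A₁ ⊗ₖ C₀ + A₁ ⊗ₖ C₁) ⊗ₖ B₀
        + (A₀ ⊗ₖ C₀ + A₀ ⊗ₖ C₁ + A₁ ⊗ₖ C₀ - A₁ ⊗ₖ C₁) ⊗ₖ B₁ := by
    rw [hS]
    ext ⟨⟨a, c⟩, b⟩ ⟨⟨a', c'⟩, b'⟩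
    simp [Matrix.reindex_apply, Matrix.submatrix_apply, eACB, Matrix.add_apply,
      Matrix.sub_apply, Matrix.neg_apply, Matrix.kroneckerMap_apply]
    ring
  have decompR : S.reindex eABC.symm eABC.symm
      = (A₀ ⊗ₖ B₀ + A₀ ⊗ₖ B₁ + A₁ ⊗ₖ B₀ - A₁ ⊗ₖ B₁) ⊗ₖ C₁
        + (-(A₀ ⊗ₖ B₀) + A₀ ⊗ₖ B₁ + A₁ ⊗ₖ B₀ + A₁ ⊗ₖ B₁) ⊗ₖ C₀ := by
    rw [hS]
    ext ⟨⟨a, b⟩, c⟩ ⟨⟨a', b'⟩, c'⟩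
    simp [Matrix.reindex_apply, Matrix.submatrix_apply, eABC, Equiv.prodAssoc,
      Matrix.add_apply, Matrix.sub_apply, Matrix.neg_apply, Matrix.kroneckerMap_apply]
    ring
  have hP : ∀ l, ((S * (ρA l ⊗ₖ ρBC l)).trace).re ≤ 2 * Real.sqrt 2 := by
    intro l
    rw [decompP, Matrix.add_mul, Matrix.trace_add, trace_kron_mul, trace_kron_mul]
    refine combine ?_ ?_ ?_ ?_
    · exact trace_herm_mul_im_zero hA₀ (hρA l).1.isHermitian
    · exact trace_herm_mul_im_zero hA₁ (hρA l).1.isHermitian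
    · exact pair_bound hA₀ hA₁ hA₀sq hA₁sq hAanti (hρA l)
    · have := chsh_bound hB₀ hB₁ hC₀ hC₁ hB₀sq hB₁sq hC₀sq hC₁sq hBanti hCanti (hρBC l)
      linarith
  have hQ : ∀ l, ((S * ((ρAC l ⊗ₖ ρB l).reindex eACB eACB)).trace).re ≤ 2 * Real.sqrt 2 := by
    intro l
    rw [trace_mul_reindex, decompQ, Matrix.add_mul, Matrix.trace_add,
      trace_kron_mul, trace_kron_mul]
    refine combine' ?_ ?_ ?_ ?_
    · exact trace_herm_mul_im_zero hB₀ (hρB l).1.isHermitian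
    · exact trace_herm_mul_im_zero hB₁ (hρB l).1.isHermitian
    · exact pair_bound hB₀ hB₁ hB₀sq hB₁sq hBanti (hρB l)
    · have := chsh_bound hA₀ hA₁ hC₀ hC₁ hA₀sq hA₁sq hC₀sq hC₁sq hAanti hCanti (hρAC l)
      linarith
  have hR : ∀ l, ((S * ((ρAB l ⊗ₖ ρC l).reindex eABC eABC)).trace).re ≤ 2 * Real.sqrt 2 := by
    intro l
    rw [trace_mul_reindex, decompR, Matrix.add_mul, Matrix.trace_add,
      trace_kron_mul, trace_kron_mul]
    refine combine' ?_ ?_ ?_ ?_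
    · exact trace_herm_mul_im_zero hC₁ (hρC l).1.isHermitian
    · exact trace_herm_mul_im_zero hC₀ (hρC l).1.isHermitian
    · have := pair_bound hC₀ hC₁ hC₀sq hC₁sq hCanti (hρC l)
      linarith
    · have := chsh_bound hA₀ hA₁ hB₀ hB₁ hA₀sq hA₁sq hB₀sq hB₁sq hAanti hBanti (hρAB l)
      linarith
  rw [hρ]
  rw [Matrix.mul_add, Matrix.mul_add, Matrix.trace_add, Matrix.trace_add,
    Finset.mul_sum, Finset.mul_sum, Finset.mul_sum,
    Matrix.trace_sum, Matrix.trace_sum, Matrix.trace_sum]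
  simp only [Matrix.mul_smul, Matrix.trace_smul, smul_eq_mul]
  simp only [Complex.add_re, Complex.re_sum, Complex.re_ofReal_mul]
  have c0 : (0:ℝ) ≤ 2 * Real.sqrt 2 := by positivity
  have b1 : ∑ l, p l * ((S * (ρA l ⊗ₖ ρBC l)).trace).re
      ≤ (∑ l, p l) * (2 * Real.sqrt 2) := by
    rw [Finset.sum_mul]
    exact Finset.sum_le_sum fun l _ => mul_le_mul_of_nonneg_left (hP l) (hp l)
  have b2 : ∑ l, q l * ((S * ((ρAC l ⊗ₖ ρB l).reindex eACB eACB)).trace).re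
      ≤ (∑ l, q l) * (2 * Real.sqrt 2) := by
    rw [Finset.sum_mul]
    exact Finset.sum_le_sum fun l _ => mul_le_mul_of_nonneg_left (hQ l) (hq l)
  have b3 : ∑ l, r l * ((S * ((ρAB l ⊗ₖ ρC l).reindex eABC eABC)).trace).re
      ≤ (∑ l, r l) * (2 * Real.sqrt 2) := by
    rw [Finset.sum_mul]
    exact Finset.sum_le_sum fun l _ => mul_le_mul_of_nonneg_left (hR l) (hr l)
  nlinarith [b1, b2, b3]
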